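/- Let A be a finite poset and let a ∈ A be a colinear point with witness a↓. Set B = A∖{a} with the induced order. Then c_B(a↓) = c_A(a↓) + c_A(a), and c_B(b) = c_A(b) for every b ∈ B with b ≠ a↓. -/
import Mathlib


-- `μ` is the Möbius function of the finite poset `P` (characterized by: `μ x y = 0` when
-- `¬ y ≤ x`, and `∑_{b : c ≤ b ≤ a} μ b c = δ_{a,c}` for all `c ≤ a`).
open Classical in
def IsMobiusFn {P : Type*} [PartialOrder P] [Fintype P] (μ : P → P → ℤ) : Prop :=
  (∀ x y : P, ¬ y ≤ x → μ x y = 0) ∧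
  (∀ a c : P, c ≤ a →
    (∑ b ∈ Finset.univ.filter (fun b => c ≤ b ∧ b ≤ a), μ b c) = if a = c then 1 else 0)

-- `c_P(x) = ∑_{y ∈ P, y ≥ x} μ_P(y, x)`.
open Classical in
noncomputable def coefCFn {P : Type*} [PartialOrder P] [Fintype P] (μ : P → P → ℤ) (x : P) : ℤ :=
  ∑ y ∈ Finset.univ.filter (fun y => x ≤ y), μ y x

open Classical

lemma mob_self {P : Type*} [PartialOrder P] [Fintype P] {μ : P → P → ℤ}
    (h : IsMobiusFn μ) (x : P) : μ x x = 1 := by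
  have h2 := h.2 x x le_rfl
  rw [if_pos rfl] at h2
  have hs : Finset.univ.filter (fun b => x ≤ b ∧ b ≤ x) = {x} := by
    ext b
    simp only [Finset.mem_filter, Finset.mem_univ, true_and, Finset.mem_singleton]
    constructor
    · rintro ⟨h1, h2⟩; exact le_antisymm h2 h1
    · rintro rfl; exact ⟨le_rfl, le_rfl⟩
  rwa [hs, Finset.sum_singleton] at h2

lemma mob_unique {P : Type*} [PartialOrder P] [Fintype P] {μ ν : P → P → ℤ}
    (hμ : IsMobiusFn μ) (hν : IsMobiusFn ν) : μ = ν := by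
  have key : ∀ y c : P, c ≤ y → μ y c = ν y c := by
    intro y
    induction y using WellFoundedLT.induction with
    | _ y IH =>
      intro c hcy
      have h1 := hμ.2 y c hcy
      have h2 := hν.2 y c hcy
      have hy : y ∈ Finset.univ.filter (fun b => c ≤ b ∧ b ≤ y) := by simp [hcy]
      rw [← Finset.add_sum_erase _ _ hy] at h1 h2
      have heq : ∑ b ∈ (Finset.univ.filter (fun b => c ≤ b ∧ b ≤ y)).erase y, μ b c
          = ∑ b ∈ (Finset.univ.filter (fun b => c ≤ b ∧ b ≤ y)).erase y, ν b c := by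
        refine Finset.sum_congr rfl fun b hb => ?_
        simp only [Finset.mem_erase, Finset.mem_filter, Finset.mem_univ, true_and] at hb
        exact IH b (lt_of_le_of_ne hb.2.2 hb.1) c hb.2.1
      omega
  funext y c
  by_cases h : c ≤ y
  · exact key y c h
  · rw [hμ.1 y c h, hν.1 y c h]

lemma subsum {A : Type*} [Fintype A] (a : A) (p : A → Prop) (f : A → ℤ) :
    ∑ b ∈ Finset.univ.filter (fun b : {x : A // x ≠ a} => p (b : A)), f (b : A)
      = ∑ b ∈ (Finset.univ.filter p).erase a, f b := by
  rw [Finset.sum_filter]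
  rw [← Finset.sum_subtype (p := fun x : A => x ≠ a)
      (Finset.univ.filter (fun x => x ≠ a)) (by simp) (fun b => if p b then f b else 0)]
  rw [← Finset.sum_filter]
  have : ((Finset.univ.filter (fun x : A => x ≠ a)).filter p) = (Finset.univ.filter p).erase a := by
    ext b
    simp only [Finset.mem_filter, Finset.mem_univ, true_and, Finset.mem_erase]
  rw [this]

open Classical in
-- Let `A` be a finite poset and `a ∈ A` a colinear point with witness `aDn` (`aDn < a` and
-- every `b < a` satisfies `b ≤ aDn`).  Let `B = A∖{a}` with the induced order.  Then
-- `c_B(aDn) = c_A(aDn) + c_A(a)`, and `c_B(b) = c_A(b)` for every `b ∈ B` with `b ≠ aDn`.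
theorem stmt9 {A : Type*} [PartialOrder A] [Fintype A]
    (a aDn : A) (h1 : aDn < a) (h2 : ∀ b : A, b < a → b ≤ aDn)
    (μA : A → A → ℤ) (hμA : IsMobiusFn μA)
    (μB : {b : A // b ≠ a} → {b : A // b ≠ a} → ℤ) (hμB : IsMobiusFn μB) :
    coefCFn μB ⟨aDn, h1.ne⟩ = coefCFn μA aDn + coefCFn μA a ∧
    ∀ b : {b : A // b ≠ a}, (b : A) ≠ aDn → coefCFn μB b = coefCFn μA (b : A) := by
  -- value of μA at (a, c)
  have afact : ∀ c : A, c ≠ a → c ≤ a → μA a c = -(if aDn = c then 1 else 0) := by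
    intro c hne hca
    have hclt : c < a := lt_of_le_of_ne hca hne
    have hcd : c ≤ aDn := h2 c hclt
    have hr := hμA.2 a c hca
    rw [if_neg (Ne.symm hne)] at hr
    have hsplit : Finset.univ.filter (fun b => c ≤ b ∧ b ≤ a)
        = insert a (Finset.univ.filter (fun b => c ≤ b ∧ b ≤ aDn)) := by
      ext b
      simp only [Finset.mem_filter, Finset.mem_univ, true_and, Finset.mem_insert]
      constructor
      · rintro ⟨hcb, hba⟩
        by_cases hb : b = a
        · exact Or.inl hb
        · exact Or.inr ⟨hcb, h2 b (lt_of_le_of_ne hba hb)⟩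
      · rintro (rfl | ⟨hcb, hbd⟩)
        · exact ⟨hca, le_rfl⟩
        · exact ⟨hcb, hbd.trans h1.le⟩
    have hnotmem : a ∉ Finset.univ.filter (fun b => c ≤ b ∧ b ≤ aDn) := by
      simp [h1.not_ge]
    rw [hsplit, Finset.sum_insert hnotmem, hμA.2 aDn c hcd] at hr
    by_cases hd : aDn = c <;> simp only [hd, if_pos, if_neg, ite_true, ite_false] at hr ⊢ <;> omega
  have hmaa : μA a a = 1 := mob_self hμA a
  -- the candidate Möbius function for B
  set ν : {b : A // b ≠ a} → {b : A // b ≠ a} → ℤ :=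
    fun y c => μA y c + if (c : A) = aDn then μA y a else 0 with hνdef
  have hν : IsMobiusFn ν := by
    constructor
    · intro x y hxy
      have hxy' : ¬ (y : A) ≤ (x : A) := fun h => hxy h
      have e1 : μA (x : A) (y : A) = 0 := hμA.1 _ _ hxy'
      have e2 : (if (y : A) = aDn then μA (x : A) a else 0) = 0 := by
        by_cases hy : (y : A) = aDn
        · rw [if_pos hy]
          refine hμA.1 _ _ (fun hax => hxy' ?_)
          rw [hy]; exact h1.le.trans hax
        · rw [if_neg hy]
      show μA (x : A) (y : A) + _ = 0
      rw [e1, e2]; ring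
    · intro y c hcy
      have hcy' : (c : A) ≤ (y : A) := hcy
      have trans : (∑ b ∈ Finset.univ.filter (fun b : {b : A // b ≠ a} => c ≤ b ∧ b ≤ y), ν b c)
          = ∑ b ∈ (Finset.univ.filter (fun x : A => (c : A) ≤ x ∧ x ≤ (y : A))).erase a,
              (μA b (c : A) + if (c : A) = aDn then μA b a else 0) := by
        have h := subsum a (fun x : A => (c : A) ≤ x ∧ x ≤ (y : A))
          (fun x => μA x (c : A) + if (c : A) = aDn then μA x a else 0)
        convert h using 2 <;>
        · ext b
          simp [Subtype.coe_le_coe]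
      rw [trans]
      set S := Finset.univ.filter (fun x : A => (c : A) ≤ x ∧ x ≤ (y : A)) with hSdef
      have hSsum : (∑ b ∈ S, μA b (c : A)) = if (y : A) = (c : A) then 1 else 0 :=
        hμA.2 (y : A) (c : A) hcy'
      have hiff : (y = c) = ((y : A) = (c : A)) := by
        simp [Subtype.ext_iff]
      rw [Finset.sum_add_distrib]
      by_cases hc : (c : A) = aDn
      · -- c = aDn
        have hT2base : ∀ b ∈ S.erase a, ¬ a ≤ b → μA b a = 0 := by
          intro b _ hab
          exact hμA.1 _ _ hab
        by_cases hay : a ≤ (y : A)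
        · have haS : a ∈ S := by
            simp only [hSdef, Finset.mem_filter, Finset.mem_univ, true_and]
            exact ⟨by rw [hc]; exact h1.le, hay⟩
          have hT1 : (∑ b ∈ S.erase a, μA b (c : A))
              = (if (y : A) = (c : A) then 1 else 0) + 1 := by
            rw [Finset.sum_erase_eq_sub haS, hSsum,
              afact (c : A) c.2 (by rw [hc]; exact h1.le)]
            rw [if_pos hc.symm]; ring
          have hT2 : (∑ b ∈ S.erase a, if (c : A) = aDn then μA b a else 0) = -1 := by
            simp only [if_pos hc]
            have hfil : (∑ b ∈ (S.erase a).filter (fun x => a ≤ x), μA b a)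
                = ∑ b ∈ S.erase a, μA b a := by
              refine Finset.sum_filter_of_ne ?_
              intro x hx hne
              by_contra hax
              exact hne (hμA.1 _ _ hax)
            have hset : (S.erase a).filter (fun x => a ≤ x)
                = (Finset.univ.filter (fun x : A => a ≤ x ∧ x ≤ (y : A))).erase a := by
              ext b
              simp only [hSdef, Finset.mem_filter, Finset.mem_erase, Finset.mem_univ, true_and]
              constructor
              · rintro ⟨⟨hba, hcb, hby⟩, hab⟩
                exact ⟨hba, hab, hby⟩
              · rintro ⟨hba, hab, hby⟩
                exact ⟨⟨hba, by rw [hc]; exact (h1.le.trans hab), hby⟩, hab⟩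
            have hTsum : (∑ b ∈ Finset.univ.filter (fun x : A => a ≤ x ∧ x ≤ (y : A)), μA b a)
                = 0 := by
              rw [hμA.2 (y : A) a hay, if_neg y.2]
            have haT : a ∈ Finset.univ.filter (fun x : A => a ≤ x ∧ x ≤ (y : A)) := by
              simp [hay]
            rw [← hfil, hset, Finset.sum_erase_eq_sub haT, hTsum, hmaa]
            norm_num
          rw [hT1, hT2, hiff]; ring
        · have haS : a ∉ S := by
            simp only [hSdef, Finset.mem_filter, Finset.mem_univ, true_and]
            exact fun h => hay h.2
          have hT1 : (∑ b ∈ S.erase a, μA b (c : A)) = if (y : A) = (c : A) then 1 else 0 := by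
            rw [Finset.erase_eq_of_notMem haS, hSsum]
          have hT2 : (∑ b ∈ S.erase a, if (c : A) = aDn then μA b a else 0) = 0 := by
            refine Finset.sum_eq_zero fun b hb => ?_
            simp only [Finset.mem_erase, hSdef, Finset.mem_filter, Finset.mem_univ,
              true_and] at hb
            rw [if_pos hc]
            refine hμA.1 _ _ (fun hab => hay (hab.trans hb.2.2))
          rw [hT1, hT2, hiff]; ring
      · -- c ≠ aDn
        have hT2 : (∑ b ∈ S.erase a, if (c : A) = aDn then μA b a else 0) = 0 := by
          simp [hc]
        rw [hT2, add_zero]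
        by_cases haS : a ∈ S
        · have hca : (c : A) ≤ a := by
            simp only [hSdef, Finset.mem_filter, Finset.mem_univ, true_and] at haS
            exact haS.1
          have hval : μA a (c : A) = 0 := by
            rw [afact (c : A) c.2 hca, if_neg (fun h => hc h.symm)]
            ring
          rw [Finset.sum_erase_eq_sub haS, hSsum, hval, hiff]
          ring
        · rw [Finset.erase_eq_of_notMem haS, hSsum, hiff]
  have hEq : μB = ν := mob_unique hμB hν
  constructor
  · -- c_B(aDn) = c_A(aDn) + c_A(a)
    rw [hEq]
    have e1 : coefCFn ν ⟨aDn, h1.ne⟩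
        = ∑ b ∈ (Finset.univ.filter (fun z : A => aDn ≤ z)).erase a,
            (μA b aDn + if aDn = aDn then μA b a else 0) :=
      subsum a (fun z : A => aDn ≤ z) (fun x => μA x aDn + if aDn = aDn then μA x a else 0)
    have e2 : (∑ b ∈ (Finset.univ.filter (fun z : A => aDn ≤ z)).erase a,
          (μA b aDn + if aDn = aDn then μA b a else 0))
        = ∑ b ∈ (Finset.univ.filter (fun z : A => aDn ≤ z)).erase a, (μA b aDn + μA b a) :=
      Finset.sum_congr rfl (fun b _ => by rw [if_pos rfl])
    rw [e1, e2]
    rw [Finset.sum_add_distrib]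
    have haS : a ∈ Finset.univ.filter (fun z : A => aDn ≤ z) := by simp [h1.le]
    have hT1 : (∑ b ∈ (Finset.univ.filter (fun z : A => aDn ≤ z)).erase a, μA b aDn)
        = coefCFn μA aDn + 1 := by
      rw [Finset.sum_erase_eq_sub haS, afact aDn h1.ne h1.le, if_pos rfl]
      show (∑ y ∈ Finset.univ.filter (fun y => aDn ≤ y), μA y aDn) - (-1) = _
      rw [coefCFn]; ring
    have hT2 : (∑ b ∈ (Finset.univ.filter (fun z : A => aDn ≤ z)).erase a, μA b a)
        = coefCFn μA a - 1 := by
      have hfil : (∑ b ∈ ((Finset.univ.filter (fun z : A => aDn ≤ z)).erase a).filter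
            (fun x => a ≤ x), μA b a)
          = ∑ b ∈ (Finset.univ.filter (fun z : A => aDn ≤ z)).erase a, μA b a := by
        refine Finset.sum_filter_of_ne ?_
        intro x hx hne
        by_contra hax
        exact hne (hμA.1 _ _ hax)
      have hset : ((Finset.univ.filter (fun z : A => aDn ≤ z)).erase a).filter (fun x => a ≤ x)
          = (Finset.univ.filter (fun z : A => a ≤ z)).erase a := by
        ext b
        simp only [Finset.mem_filter, Finset.mem_erase, Finset.mem_univ, true_and]
        constructor
        · rintro ⟨⟨hba, _⟩, hab⟩; exact ⟨hba, hab⟩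
        · rintro ⟨hba, hab⟩; exact ⟨⟨hba, h1.le.trans hab⟩, hab⟩
      have haT : a ∈ Finset.univ.filter (fun z : A => a ≤ z) := by simp
      rw [← hfil, hset, Finset.sum_erase_eq_sub haT, hmaa, coefCFn]
    rw [hT1, hT2]; ring
  · intro b hb
    rw [hEq]
    have e1 : coefCFn ν b
        = ∑ z ∈ (Finset.univ.filter (fun z : A => (b : A) ≤ z)).erase a,
            (μA z (b : A) + if (b : A) = aDn then μA z a else 0) :=
      subsum a (fun z : A => (b : A) ≤ z) (fun x => μA x (b : A) + if (b : A) = aDn then μA x a else 0)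
    rw [e1]
    simp only [if_neg hb, add_zero]
    by_cases haS : a ∈ Finset.univ.filter (fun z : A => (b : A) ≤ z)
    · have hba : (b : A) ≤ a := by
        simpa using haS
      rw [Finset.sum_erase_eq_sub haS, afact (b : A) b.2 hba, if_neg (fun h => hb h.symm),
        coefCFn]
      ring
    · rw [Finset.erase_eq_of_notMem haS, coefCFn]
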